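/- arXiv:1810.09383 — 4 statements merged into one kernel-verified Lean document; each statement's English description precedes it below -/
import Mathlib

section
/- Let I be an ideal on ℕ (a family of subsets of ℕ closed under taking subsets and finite unions). Suppose there exists an uncountable family 𝒜 of subsets of ℕ such that no member of 𝒜 belongs to I, while the intersection of any two distinct members of 𝒜 belongs to I. Then the quotient Banach space ℓ∞/c_{0,I} is not isomorphic to a (closed) subspace of ℓ∞; that is, there is no bounded linear map T from ℓ∞/c_{0,I} into ℓ∞ for which there exists c > 0 with ‖x‖ ≤ c·‖T x‖ for all x. -/
open scoped ENNReal
set_option synthInstance.maxHeartbeats 1000000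
set_option maxHeartbeats 1000000

noncomputable section

/-- The Banach space `ℓ∞` of bounded real sequences with the supremum norm. -/
abbrev LInf : Type := lp (fun _ : ℕ => ℝ) ∞

/-- An ideal on `ℕ`: a family of subsets of `ℕ` closed under taking subsets
and finite unions (in particular it contains the empty union `∅`). -/
structure SetIdeal where
  sets : Set (Set ℕ)
  subset_mem : ∀ ⦃A B : Set ℕ⦄, A ∈ sets → B ⊆ A → B ∈ sets
  union_mem : ∀ ⦃A B : Set ℕ⦄, A ∈ sets → B ∈ sets → A ∪ B ∈ sets
  empty_mem : ∅ ∈ sets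

/-- The set of bounded sequences converging to `0` along the ideal `I`:
for every `ε > 0` the set `{n | ε ≤ |x n|}` belongs to `I`. -/
def c0Set (I : SetIdeal) : Set LInf :=
  {x | ∀ ε : ℝ, 0 < ε → {n : ℕ | ε ≤ |x n|} ∈ I.sets}

/-- `c_{0,I}`, as a linear subspace of `ℓ∞`. -/
def c0I (I : SetIdeal) : Submodule ℝ LInf where
  carrier := c0Set I
  zero_mem' := by
    intro ε hε
    have h : {n : ℕ | ε ≤ |(0 : LInf) n|} = (∅ : Set ℕ) := by
      ext n
      simp [lp.coeFn_zero, hε.not_ge]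
    rw [h]; exact I.empty_mem
  add_mem' := by
    intro x y hx hy ε hε
    refine I.subset_mem (I.union_mem (hx (ε / 2) (by linarith)) (hy (ε / 2) (by linarith))) ?_
    intro n hn
    simp only [Set.mem_setOf_eq, lp.coeFn_add, Pi.add_apply] at hn
    by_contra hmem
    simp only [Set.mem_union, Set.mem_setOf_eq, not_or, not_le] at hmem
    have := abs_add_le (x n) (y n)
    linarith [hn, hmem.1, hmem.2]
  smul_mem' := by
    intro c x hx ε hε
    rcases eq_or_ne c 0 with rfl | hc
    · have h : {n : ℕ | ε ≤ |((0 : ℝ) • x) n|} = (∅ : Set ℕ) := by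
        ext n
        simp [lp.coeFn_smul, hε.not_ge]
      rw [h]; exact I.empty_mem
    · have hcpos : 0 < |c| := abs_pos.mpr hc
      refine I.subset_mem (hx (ε / |c|) (by positivity)) ?_
      intro n hn
      simp only [Set.mem_setOf_eq, lp.coeFn_smul, Pi.smul_apply, smul_eq_mul, abs_mul] at hn
      simp only [Set.mem_setOf_eq]
      rw [div_le_iff₀ hcpos]
      linarith [hn]


def chi (A : Set ℕ) : LInf :=
  ⟨A.indicator 1, memℓp_infty ⟨1, by
    rintro r ⟨n, rfl⟩
    by_cases h : n ∈ A <;>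
      simp [Set.indicator_apply, h, Real.norm_eq_abs]⟩⟩

open Classical in
lemma chi_apply (A : Set ℕ) (n : ℕ) : (chi A) n = if n ∈ A then (1:ℝ) else 0 := by
  by_cases h : n ∈ A <;> simp [chi, Set.indicator_apply, h]

lemma ideal_biUnion (I : SetIdeal) {ι : Type*} (s : Finset ι) (f : ι → Set ℕ)
    (h : ∀ i ∈ s, f i ∈ I.sets) : (⋃ i ∈ s, f i) ∈ I.sets := by
  classical
  induction s using Finset.induction with
  | empty => simpa using I.empty_mem
  | @insert a s ha ih =>
    rw [Finset.set_biUnion_insert]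
    exact I.union_mem (h _ (Finset.mem_insert_self _ _))
      (ih fun i hi => h _ (Finset.mem_insert_of_mem hi))

lemma norm_mk_chi_ge (I : SetIdeal) {A : Set ℕ} (hA : A ∉ I.sets) :
    (1:ℝ)/2 ≤ ‖(Submodule.Quotient.mk (chi A) : LInf ⧸ c0I I)‖ := by
  by_contra hlt
  push_neg at hlt
  obtain ⟨m, hm, hmn⟩ := Submodule.Quotient.norm_mk_lt
    (Submodule.Quotient.mk (chi A) : LInf ⧸ c0I I) (ε := 1/2 - ‖(Submodule.Quotient.mk (chi A) : LInf ⧸ c0I I)‖) (by linarith)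
  have hmem : m - chi A ∈ c0I I := by
    have := (Submodule.Quotient.eq (c0I I)).mp hm
    exact this
  have hsub : A ⊆ {n : ℕ | (1:ℝ)/2 ≤ |(m - chi A) n|} := by
    intro n hn
    have h1 : |m n| ≤ ‖m‖ := by
      simpa [Real.norm_eq_abs] using lp.norm_apply_le_norm (by norm_num : (∞ : ℝ≥0∞) ≠ 0) m n
    have h2 : (m - chi A) n = m n - 1 := by
      simp [lp.coeFn_sub, chi_apply, hn]
    simp only [Set.mem_setOf_eq, h2]
    have : ‖m‖ < 1/2 := by linarith
    rw [abs_sub_comm]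
    have := abs_le.mp (le_of_lt (lt_of_le_of_lt h1 this))
    rw [abs_of_pos (by linarith)]
    linarith
  exact hA (I.subset_mem (hmem (1/2) (by norm_num)) hsub)


lemma norm_mk_sum_le (I : SetIdeal) (F : Finset (Set ℕ)) (s : Set ℕ → ℝ)
    (hs : ∀ A, |s A| ≤ 1)
    (hF : ∀ A ∈ F, ∀ B ∈ F, A ≠ B → A ∩ B ∈ I.sets) :
    ‖(Submodule.Quotient.mk (∑ A ∈ F, s A • chi A) : LInf ⧸ c0I I)‖ ≤ 1 := by
  classical
  set x : LInf := ∑ A ∈ F, s A • chi A with hxdef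
  have hx : ∀ m : ℕ, x m = ∑ A ∈ F, s A * (if m ∈ A then (1:ℝ) else 0) := by
    intro m
    rw [hxdef, lp.coeFn_sum, Finset.sum_apply]
    refine Finset.sum_congr rfl fun A _ => ?_
    rw [lp.coeFn_smul, Pi.smul_apply, chi_apply, smul_eq_mul]
  set B : Set ℕ := ⋃ p ∈ (F ×ˢ F), (if p.1 = p.2 then (∅ : Set ℕ) else p.1 ∩ p.2) with hBdef
  have hB : B ∈ I.sets := by
    refine ideal_biUnion I _ _ fun p hp => ?_
    rcases Finset.mem_product.mp hp with ⟨h1, h2⟩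
    by_cases h : p.1 = p.2
    · simp [h, I.empty_mem]
    · simpa [h] using hF _ h1 _ h2 h
  have hnotB : ∀ m : ℕ, m ∉ B → ∀ A ∈ F, ∀ A' ∈ F, A ≠ A' → ¬(m ∈ A ∧ m ∈ A') := by
    intro m hm A hAF A' hA'F hne ⟨h1, h2⟩
    apply hm
    rw [hBdef]
    refine Set.mem_biUnion (Finset.mem_product.mpr ⟨hAF, hA'F⟩ : (A, A') ∈ F ×ˢ F) ?_
    simp [hne, h1, h2]
  have hxbd : ∀ m : ℕ, m ∉ B → |x m| ≤ 1 := by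
    intro m hm
    by_cases hex : ∃ A₀ ∈ F, m ∈ A₀
    · obtain ⟨A₀, hA₀F, hmA₀⟩ := hex
      rw [hx m, Finset.sum_eq_single A₀]
      · simpa [hmA₀] using hs A₀
      · intro A hAF hne
        have : m ∉ A := fun hmA => hnotB m hm A hAF A₀ hA₀F hne ⟨hmA, hmA₀⟩
        simp [this]
      · intro h; exact absurd hA₀F h
    · push_neg at hex
      rw [hx m, Finset.sum_eq_zero]
      · norm_num
      · intro A hAF; simp [hex A hAF]
  set y : LInf := ⟨B.indicator (⇑x), memℓp_infty ⟨‖x‖, by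
    rintro r ⟨m, rfl⟩
    by_cases h : m ∈ B
    · simpa [Set.indicator_apply, h, Real.norm_eq_abs] using
        lp.norm_apply_le_norm (by norm_num : (∞ : ℝ≥0∞) ≠ 0) x m
    · simp [Set.indicator_apply, h, norm_nonneg x]⟩⟩ with hydef
  have hyapp : ∀ m : ℕ, y m = B.indicator (⇑x) m := fun m => rfl
  have hy : y ∈ c0I I := by
    intro ε hε
    refine I.subset_mem hB fun m hm => ?_
    simp only [Set.mem_setOf_eq] at hm
    by_contra hmB
    rw [hyapp, Set.indicator_of_notMem hmB] at hm
    simp at hm; linarith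
  have hmkeq : (Submodule.Quotient.mk x : LInf ⧸ c0I I) = Submodule.Quotient.mk (x - y) := by
    rw [Submodule.Quotient.eq]
    simpa using hy
  rw [hmkeq]
  refine le_trans (Submodule.Quotient.norm_mk_le _ _) ?_
  refine lp.norm_le_of_forall_le one_pos.le fun m => ?_
  rw [Real.norm_eq_abs]
  have : (x - y) m = x m - y m := by rw [lp.coeFn_sub, Pi.sub_apply]
  rw [this, hyapp]
  by_cases h : m ∈ B
  · rw [Set.indicator_of_mem h]; simp
  · rw [Set.indicator_of_notMem h, sub_zero]; exact hxbd m h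

/-- **Theorem A.** If there is an uncountable family `𝒜` of sets not in the
ideal `I` whose pairwise intersections lie in `I`, then the quotient
`ℓ∞ / c_{0,I}` is not isomorphic to a subspace of `ℓ∞`. -/
theorem quotient_not_embed_in_linf (I : SetIdeal) (𝒜 : Set (Set ℕ))
    (h𝒜 : ¬𝒜.Countable)
    (hA : ∀ A ∈ 𝒜, A ∉ I.sets)
    (hAB : ∀ A ∈ 𝒜, ∀ B ∈ 𝒜, A ≠ B → A ∩ B ∈ I.sets) :
    ¬∃ (T : (LInf ⧸ c0I I) →L[ℝ] LInf) (c : ℝ), 0 < c ∧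
      ∀ x : LInf ⧸ c0I I, ‖x‖ ≤ c * ‖T x‖ := by
  rintro ⟨T, c, hc, hTc⟩
  classical
  set δ : ℝ := 1 / (4 * c) with hδdef
  have hδ : 0 < δ := by positivity
  set v : Set ℕ → ℕ → ℝ := fun A n => (T (Submodule.Quotient.mk (chi A))) n with hvdef
  set S : ℕ → Set (Set ℕ) := fun n => {A | A ∈ 𝒜 ∧ δ ≤ |v A n|} with hSdef
  have hcover : 𝒜 ⊆ ⋃ n, S n := by
    intro A hAmem
    have h1 : (1:ℝ)/2 ≤ ‖(Submodule.Quotient.mk (chi A) : LInf ⧸ c0I I)‖ :=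
      norm_mk_chi_ge I (hA A hAmem)
    have h2 : 1/2 ≤ c * ‖T (Submodule.Quotient.mk (chi A))‖ := le_trans h1 (hTc _)
    by_contra hn
    simp only [Set.mem_iUnion, not_exists] at hn
    have h3 : ‖T (Submodule.Quotient.mk (chi A))‖ ≤ δ := by
      refine lp.norm_le_of_forall_le hδ.le fun m => ?_
      rw [Real.norm_eq_abs]
      by_contra hgt
      push_neg at hgt
      exact hn m ⟨hAmem, le_of_lt hgt⟩
    have h4 : 1/2 ≤ c * δ := le_trans h2 (mul_le_mul_of_nonneg_left h3 hc.le)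
    have h5 : c * δ = 1/4 := by rw [hδdef]; field_simp
    linarith
  have hSfin : ∀ n, (S n).Finite := by
    intro n
    by_contra hinf
    have hinf' : (S n).Infinite := hinf
    obtain ⟨t, htS, htfin, htcard⟩ := hinf'.exists_subset_ncard_eq (⌊‖T‖ / δ⌋₊ + 1)
    set F : Finset (Set ℕ) := htfin.toFinset with hFdef
    have hFS : ∀ A ∈ F, A ∈ S n := fun A hAF => htS (htfin.mem_toFinset.mp hAF)
    have hcard : F.card = ⌊‖T‖ / δ⌋₊ + 1 := by
      rw [← Set.ncard_eq_toFinset_card t htfin, htcard]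
    set sg : Set ℕ → ℝ := fun A => if 0 ≤ v A n then 1 else -1 with hsgdef
    have hsg1 : ∀ A, |sg A| ≤ 1 := by
      intro A; by_cases h : 0 ≤ v A n <;> simp [hsgdef, h]
    have hsgv : ∀ A, sg A * v A n = |v A n| := by
      intro A
      by_cases h : 0 ≤ v A n
      · simp [hsgdef, h, abs_of_nonneg h]
      · simp [hsgdef, h, abs_of_neg (lt_of_not_ge h)]
    set x : LInf := ∑ A ∈ F, sg A • chi A with hxdef
    have hmk : T (Submodule.Quotient.mk x : LInf ⧸ c0I I)
        = ∑ A ∈ F, sg A • T (Submodule.Quotient.mk (chi A)) := by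
      have h0 : (Submodule.Quotient.mk x : LInf ⧸ c0I I)
          = ∑ A ∈ F, sg A • (Submodule.Quotient.mk (chi A) : LInf ⧸ c0I I) := by
        rw [hxdef]
        simp only [← Submodule.mkQ_apply, map_sum, map_smul]
      rw [h0, map_sum]
      simp only [map_smul]
    have hcoordval : (T (Submodule.Quotient.mk x)) n = ∑ A ∈ F, sg A * v A n := by
      rw [hmk, lp.coeFn_sum, Finset.sum_apply]
      refine Finset.sum_congr rfl fun A _ => ?_
      rw [lp.coeFn_smul, Pi.smul_apply, smul_eq_mul]
    have hsum_ge : (F.card : ℝ) * δ ≤ (T (Submodule.Quotient.mk x)) n := by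
      rw [hcoordval]
      calc (F.card : ℝ) * δ = ∑ _A ∈ F, δ := by rw [Finset.sum_const, nsmul_eq_mul]
        _ ≤ ∑ A ∈ F, sg A * v A n :=
          Finset.sum_le_sum fun A hAF => by rw [hsgv A]; exact (hFS A hAF).2
    have hFpair : ∀ A ∈ F, ∀ B ∈ F, A ≠ B → A ∩ B ∈ I.sets :=
      fun A hAF B hBF hne => hAB A (hFS A hAF).1 B (hFS B hBF).1 hne
    have hnorm : ‖T (Submodule.Quotient.mk x)‖ ≤ ‖T‖ := by
      calc ‖T (Submodule.Quotient.mk x)‖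
          ≤ ‖T‖ * ‖(Submodule.Quotient.mk x : LInf ⧸ c0I I)‖ := T.le_opNorm _
        _ ≤ ‖T‖ * 1 :=
          mul_le_mul_of_nonneg_left (norm_mk_sum_le I F sg hsg1 hFpair) (norm_nonneg T)
        _ = ‖T‖ := mul_one _
    have hle : (F.card : ℝ) * δ ≤ ‖T‖ := by
      refine le_trans hsum_ge (le_trans (le_abs_self _) (le_trans ?_ hnorm))
      simpa [Real.norm_eq_abs] using
        lp.norm_apply_le_norm (by norm_num : (∞ : ℝ≥0∞) ≠ 0) (T (Submodule.Quotient.mk x)) n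
    have h6 : (F.card : ℝ) ≤ ‖T‖ / δ := (le_div_iff₀ hδ).mpr hle
    have h7 : ‖T‖ / δ < (F.card : ℝ) := by
      rw [hcard]
      push_cast
      exact Nat.lt_floor_add_one _
    linarith
  exact h𝒜 ((Set.countable_iUnion fun n => (hSfin n).countable).mono hcover)
end
end

section
/- Let I be an ideal on ℕ. Suppose there exists an uncountable family 𝒜 of subsets of ℕ such that no member of 𝒜 belongs to I, while the intersection of any two distinct members of 𝒜 belongs to I. Then the subspace c_{0,I} is not complemented in ℓ∞; that is, there is no bounded linear projection from ℓ∞ onto c_{0,I}. -/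
open scoped ENNReal
set_option synthInstance.maxHeartbeats 1000000
set_option maxHeartbeats 1000000

noncomputable section

section Aux

open Classical in
/-- Build an element of `ℓ∞` from a bounded function. -/
def ofBdd (f : ℕ → ℝ) (C : ℝ) (h : ∀ n, |f n| ≤ C) : LInf :=
  ⟨f, memℓp_infty ⟨C, by rintro r ⟨n, rfl⟩; simpa [Real.norm_eq_abs] using h n⟩⟩

@[simp] lemma ofBdd_apply (f : ℕ → ℝ) (C : ℝ) (h : ∀ n, |f n| ≤ C) (n : ℕ) :
    (ofBdd f C h) n = f n := rfl

open Classical in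
/-- The indicator of a set, as an element of `ℓ∞`. -/
def ind (A : Set ℕ) : LInf :=
  ofBdd (fun n => if n ∈ A then 1 else 0) 1 (by
    intro n; by_cases h : n ∈ A <;> simp [h])

open Classical in
lemma ind_apply (A : Set ℕ) (n : ℕ) : (ind A) n = if n ∈ A then 1 else 0 := rfl

/-- Evaluation at a coordinate as a linear map. -/
def evalL (n : ℕ) : LInf →ₗ[ℝ] ℝ where
  toFun x := x n
  map_add' x y := by simp [lp.coeFn_add]
  map_smul' c x := by simp [lp.coeFn_smul]

/-- Evaluation at a coordinate as a continuous linear map. -/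
def evalCLM (n : ℕ) : LInf →L[ℝ] ℝ :=
  LinearMap.mkContinuous (evalL n) 1 (fun x => by
    show ‖(x : ℕ → ℝ) n‖ ≤ 1 * ‖x‖
    simpa [evalL, Real.norm_eq_abs] using lp.norm_apply_le_norm ENNReal.top_ne_zero x n)

@[simp] lemma evalCLM_apply (n : ℕ) (x : LInf) : evalCLM n x = x n := rfl

lemma mem_c0I_iff (I : SetIdeal) (x : LInf) :
    x ∈ c0I I ↔ ∀ ε : ℝ, 0 < ε → {n : ℕ | ε ≤ |x n|} ∈ I.sets := Iff.rfl

lemma finsetUnion_mem (I : SetIdeal) {α : Type*} (s : Finset α) (g : α → Set ℕ)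
    (h : ∀ a ∈ s, g a ∈ I.sets) : (⋃ a ∈ s, g a) ∈ I.sets := by
  classical
  induction s using Finset.induction with
  | empty => simpa using I.empty_mem
  | insert _ _ ha ih =>
      rw [Finset.set_biUnion_insert]
      exact I.union_mem (h _ (Finset.mem_insert_self _ _))
        (ih fun a has => h a (Finset.mem_insert_of_mem has))

lemma mem_c0I_of_support_subset (I : SetIdeal) (x : LInf) (D : Set ℕ) (hD : D ∈ I.sets)
    (h : ∀ n, x n ≠ 0 → n ∈ D) : x ∈ c0I I := by
  rw [mem_c0I_iff]
  intro ε hε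
  refine I.subset_mem hD ?_
  intro n hn
  simp only [Set.mem_setOf_eq] at hn
  refine h n (fun h0 => ?_)
  rw [h0] at hn
  simp only [abs_zero] at hn
  linarith

lemma ind_not_mem_c0I (I : SetIdeal) (A : Set ℕ) (hA : A ∉ I.sets) : ind A ∉ c0I I := by
  intro hmem
  have h1 := (mem_c0I_iff I _).1 hmem 1 one_pos
  have he : {n : ℕ | (1:ℝ) ≤ |(ind A) n|} = A := by
    ext n
    by_cases h : n ∈ A <;> simp [ind_apply, h]
  rw [he] at h1
  exact hA h1

end Aux

/-- **Leonetti's theorem.** If there is an uncountable family `𝒜` of sets not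
in the ideal `I` whose pairwise intersections lie in `I`, then `c_{0,I}` is not
complemented in `ℓ∞`: there is no bounded linear projection of `ℓ∞` onto it. -/
theorem c0I_not_complemented (I : SetIdeal) (𝒜 : Set (Set ℕ))
    (h𝒜 : ¬𝒜.Countable)
    (hA : ∀ A ∈ 𝒜, A ∉ I.sets)
    (hAB : ∀ A ∈ 𝒜, ∀ B ∈ 𝒜, A ≠ B → A ∩ B ∈ I.sets) :
    ¬∃ P : LInf →L[ℝ] LInf, (∀ x, P (P x) = P x) ∧
      LinearMap.range (P : LInf →ₗ[ℝ] LInf) = c0I I := by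
  rintro ⟨P, hP2, hPr⟩
  classical
  have hfix : ∀ x ∈ c0I I, P x = x := by
    intro x hx
    rw [← hPr] at hx
    obtain ⟨w, rfl⟩ := hx
    exact hP2 w
  have hrange : ∀ x : LInf, P x ∈ c0I I := fun x => hPr ▸ ⟨x, rfl⟩
  set Q : LInf →L[ℝ] LInf := ContinuousLinearMap.id ℝ LInf - P with hQ
  have hQapply : ∀ x, Q x = x - P x := fun x => rfl
  have hQzero : ∀ x ∈ c0I I, Q x = 0 := by
    intro x hx; rw [hQapply, hfix x hx, sub_self]
  set T : ℕ → ℕ → Set (Set ℕ) := fun n k =>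
    {A | A ∈ 𝒜 ∧ ((k:ℝ)+1)⁻¹ ≤ |(Q (ind A)) n|} with hT
  -- key cardinality bound
  have hcard : ∀ n k : ℕ, ∀ s : Finset (Set ℕ), ↑s ⊆ T n k →
      (s.card : ℝ) * ((k:ℝ)+1)⁻¹ ≤ ‖(evalCLM n).comp Q‖ := by
    intro n k s hs
    set f : LInf →L[ℝ] ℝ := (evalCLM n).comp Q with hf
    set σ : Set ℕ → ℝ := fun A => if 0 ≤ f (ind A) then 1 else -1 with hσ
    have hσabs : ∀ A, σ A * f (ind A) = |f (ind A)| := by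
      intro A
      by_cases h : 0 ≤ f (ind A)
      · simp [hσ, h, abs_of_nonneg h]
      · rw [hσ]; simp only [h, if_false]
        rw [abs_of_neg (lt_of_not_ge h)]; ring
    set g : LInf := ∑ A ∈ s, σ A • ind A with hg
    set d : Set ℕ × Set ℕ → Set ℕ := fun p => if p.1 = p.2 then ∅ else p.1 ∩ p.2 with hd
    set D : Set ℕ := ⋃ p ∈ s ×ˢ s, d p with hD
    have hDI : D ∈ I.sets := by
      refine finsetUnion_mem I _ _ ?_
      rintro ⟨A, B⟩ hp
      simp only [Finset.mem_product] at hp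
      by_cases hAB' : A = B
      · rw [hd]; simpa [hAB'] using I.empty_mem
      · rw [hd]; simp only [if_neg hAB']
        exact hAB A (hs hp.1).1 B (hs hp.2).1 hAB'
    have hgm : ∀ m, g m = ∑ A ∈ s, σ A * (ind A) m := by
      intro m
      have h1 : evalCLM m g = ∑ A ∈ s, evalCLM m (σ A • ind A) := by
        rw [hg, map_sum]
      simpa [lp.coeFn_smul] using h1
    have hbound : ∀ m, m ∉ D → |g m| ≤ 1 := by
      intro m hm
      classical
      have habs : ∀ A ∈ s, |σ A * (ind A) m| ≤ 1 := by
        intro A _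
        rw [abs_mul]
        have h1 : |σ A| ≤ 1 := by
          simp only [hσ]
          by_cases h : 0 ≤ f (ind A)
          · rw [if_pos h]; simp
          · rw [if_neg h]; simp
        have h2 : |(ind A) m| ≤ 1 := by
          rw [ind_apply]
          by_cases h : m ∈ A
          · rw [if_pos h]; simp
          · rw [if_neg h]; simp
        calc |σ A| * |(ind A) m| ≤ 1 * 1 :=
          mul_le_mul h1 h2 (abs_nonneg _) zero_le_one
        _ = 1 := mul_one 1
      have hsum : ∑ A ∈ s, σ A * (ind A) m
          = ∑ A ∈ s.filter (fun A => m ∈ A), σ A * (ind A) m := by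
        refine (Finset.sum_filter_of_ne ?_).symm
        intro A _ hne
        by_contra hmA
        exact hne (by rw [ind_apply, if_neg hmA, mul_zero])
      have hcard1 : (s.filter (fun A => m ∈ A)).card ≤ 1 := by
        rw [Finset.card_le_one]
        intro A hA B hB
        simp only [Finset.mem_filter] at hA hB
        by_contra hne
        apply hm
        rw [hD]
        refine Set.mem_biUnion (Finset.mk_mem_product hA.1 hB.1) ?_
        rw [hd]
        simp only [if_neg hne]
        exact ⟨hA.2, hB.2⟩
      rw [hgm, hsum]
      calc |∑ A ∈ s.filter (fun A => m ∈ A), σ A * (ind A) m|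
          ≤ ∑ A ∈ s.filter (fun A => m ∈ A), |σ A * (ind A) m| :=
            Finset.abs_sum_le_sum_abs _ _
        _ ≤ (s.filter (fun A => m ∈ A)).card • (1:ℝ) :=
            Finset.sum_le_card_nsmul _ _ _
              (fun A hAf => habs A (Finset.mem_of_mem_filter A hAf))
        _ = (s.filter (fun A => m ∈ A)).card := by rw [nsmul_eq_mul, mul_one]
        _ ≤ 1 := by exact_mod_cast hcard1
    have hyb : ∀ m, |if m ∈ D then (0:ℝ) else g m| ≤ 1 := by
      intro m; by_cases h : m ∈ D
      · simp [h]
      · simpa [h] using hbound m h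
    set y : LInf := ofBdd (fun m => if m ∈ D then 0 else g m) 1 hyb with hy
    have hzmem : g - y ∈ c0I I := by
      refine mem_c0I_of_support_subset I _ D hDI ?_
      intro m hm0
      by_contra hmD
      apply hm0
      have hsub : (g - y) m = g m - y m := by rw [lp.coeFn_sub]; rfl
      rw [hsub, hy, ofBdd_apply]
      simp [hmD]
    have hfgy : f g = f y := by
      have h0 : f (g - y) = 0 := by
        rw [hf, ContinuousLinearMap.comp_apply, hQzero _ hzmem, map_zero]
      rw [map_sub] at h0
      linarith
    have hfg : f g = ∑ A ∈ s, |f (ind A)| := by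
      rw [hg, map_sum]
      refine Finset.sum_congr rfl fun A _ => ?_
      rw [map_smul, smul_eq_mul, hσabs]
    have hnormy : ‖y‖ ≤ 1 := by
      refine lp.norm_le_of_forall_le zero_le_one fun m => ?_
      simpa [Real.norm_eq_abs, hy] using hyb m
    have hfbound : f g ≤ ‖f‖ := by
      rw [hfgy]
      calc f y ≤ |f y| := le_abs_self _
        _ = ‖f y‖ := rfl
        _ ≤ ‖f‖ * ‖y‖ := f.le_opNorm y
        _ ≤ ‖f‖ * 1 := mul_le_mul_of_nonneg_left hnormy (norm_nonneg f)
        _ = ‖f‖ := mul_one _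
    have hlow : (s.card : ℝ) * ((k:ℝ)+1)⁻¹ ≤ ∑ A ∈ s, |f (ind A)| := by
      have := Finset.card_nsmul_le_sum s (fun A => |f (ind A)|) (((k:ℝ)+1)⁻¹)
        (fun A hAs => by
          have hmem := hs hAs
          have : ((k:ℝ)+1)⁻¹ ≤ |(Q (ind A)) n| := hmem.2
          simpa [hf, ContinuousLinearMap.comp_apply] using this)
      simpa [nsmul_eq_mul] using this
    calc (s.card : ℝ) * ((k:ℝ)+1)⁻¹ ≤ ∑ A ∈ s, |f (ind A)| := hlow
      _ = f g := hfg.symm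
      _ ≤ ‖f‖ := hfbound
  -- each T n k is finite
  have hfin : ∀ n k : ℕ, (T n k).Finite := by
    intro n k
    by_contra hinf
    rw [← Set.not_infinite, not_not] at hinf
    set C : ℝ := ‖(evalCLM n).comp Q‖ with hC
    obtain ⟨s, hs, hcardeq⟩ := hinf.exists_subset_card_eq (⌈C * ((k:ℝ)+1)⌉₊ + 1)
    have hb := hcard n k s hs
    rw [hcardeq] at hb
    have hk1 : (0:ℝ) < (k:ℝ)+1 := by positivity
    rw [← div_eq_mul_inv, div_le_iff₀ hk1] at hb
    have hceil := Nat.le_ceil (C * ((k:ℝ)+1))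
    push_cast at hb
    linarith
  -- every A ∈ 𝒜 lies in some T n k
  have hsubset : 𝒜 ⊆ ⋃ n : ℕ, ⋃ k : ℕ, T n k := by
    intro A hAmem
    have hQA : Q (ind A) ∉ c0I I := by
      intro hQA'
      have hind : ind A ∈ c0I I := by
        have hadd := (c0I I).add_mem hQA' (hrange (ind A))
        rw [hQapply, sub_add_cancel] at hadd
        exact hadd
      exact ind_not_mem_c0I I A (hA A hAmem) hind
    rw [mem_c0I_iff] at hQA
    push_neg at hQA
    obtain ⟨ε, hε, hS⟩ := hQA
    have hSne : {m : ℕ | ε ≤ |(Q (ind A)) m|}.Nonempty := by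
      rcases Set.eq_empty_or_nonempty {m : ℕ | ε ≤ |(Q (ind A)) m|} with he | hne
      · exact absurd (he ▸ I.empty_mem) hS
      · exact hne
    obtain ⟨n, hn⟩ := hSne
    obtain ⟨k, hk⟩ := exists_nat_gt ε⁻¹
    have hkε : ((k:ℝ)+1)⁻¹ ≤ ε := by
      refine inv_le_of_inv_le₀ hε ?_
      linarith
    exact Set.mem_iUnion.2 ⟨n, Set.mem_iUnion.2 ⟨k, hAmem, le_trans hkε hn⟩⟩
  exact h𝒜 (((Set.countable_iUnion fun n =>
    Set.countable_iUnion fun k => (hfin n k).countable).mono hsubset))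
end
end

section
/- Let I be an ideal on ℕ and suppose 𝒜 is a family of subsets of ℕ such that no member of 𝒜 belongs to I and the intersection of any two distinct members of 𝒜 belongs to I. Then the closed linear span in ℓ∞/c_{0,I} of the cosets {π(𝟙_A) : A ∈ 𝒜} is isometrically isomorphic to c₀(𝒜), the space of functions on 𝒜 vanishing at infinity with the supremum norm; in particular ℓ∞/c_{0,I} contains an isometric copy of c₀(𝒜). -/
open scoped ENNReal
set_option synthInstance.maxHeartbeats 1000000
set_option maxHeartbeats 1000000

noncomputable section

/-- The indicator sequence `𝟙_A ∈ ℓ∞` of a set `A ⊆ ℕ`. -/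
def indicatorSeq (A : Set ℕ) : LInf :=
  ⟨A.indicator (fun _ => (1 : ℝ)), memℓp_infty ⟨1, by
    rintro r ⟨n, rfl⟩
    by_cases h : n ∈ A <;> simp [Set.indicator, h]⟩⟩

/-- A copy of `Γ` equipped with the discrete topology. -/
def Disc (Γ : Type*) : Type _ := Γ

instance (Γ : Type*) : TopologicalSpace (Disc Γ) := ⊥

instance (Γ : Type*) : DiscreteTopology (Disc Γ) := ⟨rfl⟩

/-- `c₀(Γ)`: the Banach space of real-valued functions on `Γ` vanishing at
infinity (equivalently, `{γ | ε ≤ |f γ|}` is finite for every `ε > 0`),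
with the supremum norm. -/
abbrev czero (Γ : Type*) : Type _ := ZeroAtInftyContinuousMap (Disc Γ) ℝ

/-! ### Auxiliary machinery -/

section AuxLemmas

variable {I : SetIdeal}

lemma lp_apply_le_norm (x : LInf) (n : ℕ) : |x n| ≤ ‖x‖ := by
  simpa [Real.norm_eq_abs] using lp.norm_apply_le_norm ENNReal.top_ne_zero x n

lemma mem_c0I_of_subset {x : LInf} {S : Set ℕ} (hS : S ∈ I.sets)
    (hx : ∀ n, n ∉ S → x n = 0) : x ∈ c0I I := by
  intro ε hε
  refine I.subset_mem hS fun n hn => ?_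
  by_contra h
  rw [Set.mem_setOf_eq, hx n h] at hn
  simp only [abs_zero] at hn
  linarith

lemma c0I_isClosed (I : SetIdeal) : IsClosed ((c0I I : Submodule ℝ LInf) : Set LInf) := by
  refine isClosed_of_closure_subset fun x hx => ?_
  show x ∈ c0I I
  intro ε hε
  obtain ⟨y, hy, hxy⟩ := Metric.mem_closure_iff.mp hx (ε / 2) (by linarith)
  have hy' : y ∈ c0I I := hy
  refine I.subset_mem (hy' (ε / 2) (by linarith)) fun n hn => ?_
  rw [Set.mem_setOf_eq] at hn ⊢
  have h1 : |x n - y n| ≤ ‖x - y‖ := by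
    have := lp_apply_le_norm (x - y) n
    rwa [lp.coeFn_sub, Pi.sub_apply] at this
  have h2 : ‖x - y‖ < ε / 2 := by rwa [dist_eq_norm] at hxy
  have h3 := abs_sub_abs_le_abs_sub (x n) (y n)
  linarith

lemma le_norm_mkQ {x : LInf} {c : ℝ} (h : ∀ y ∈ c0I I, c ≤ ‖x - y‖) :
    c ≤ ‖(c0I I).mkQ x‖ := by
  refine le_of_forall_pos_le_add fun ε hε => ?_
  obtain ⟨m, hm, hlt⟩ := Submodule.Quotient.norm_mk_lt ((c0I I).mkQ x) hε
  have hy : x - m ∈ c0I I := by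
    rw [Submodule.mkQ_apply, Submodule.Quotient.eq] at hm
    simpa using (c0I I).neg_mem hm
  have := h (x - m) hy
  have hxm : x - (x - m) = m := by abel
  rw [hxm] at this
  linarith

lemma czero_norm_le {Γ : Type*} {f : czero Γ} {C : ℝ} (hC : 0 ≤ C)
    (h : ∀ x, ‖f x‖ ≤ C) : ‖f‖ ≤ C := by
  rw [← ZeroAtInftyContinuousMap.norm_toBCF_eq_norm]
  exact (BoundedContinuousFunction.norm_le hC).2 h

lemma czero_apply_le_norm {Γ : Type*} (f : czero Γ) (x : Disc Γ) : ‖f x‖ ≤ ‖f‖ := by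
  rw [← ZeroAtInftyContinuousMap.norm_toBCF_eq_norm]
  exact BoundedContinuousFunction.norm_coe_le_norm f.toBCF x

lemma finset_biUnion_mem (I : SetIdeal) {β : Type*} (s : Finset β) (f : β → Set ℕ)
    (h : ∀ b ∈ s, f b ∈ I.sets) : (⋃ b ∈ s, f b) ∈ I.sets := by
  classical
  induction s using Finset.induction_on with
  | empty => simpa using I.empty_mem
  | @insert a s ha ih =>
      rw [Finset.set_biUnion_insert]
      exact I.union_mem (h a (Finset.mem_insert_self a s))
        (ih fun b hb => h b (Finset.mem_insert_of_mem hb))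

end AuxLemmas

lemma extend_aux {G F : Type*} [NormedAddCommGroup G] [NormedSpace ℝ G]
    [NormedAddCommGroup F] [NormedSpace ℝ F] [CompleteSpace F]
    (V : Submodule ℝ G) (hV : Dense (V : Set G)) (f : V →L[ℝ] F) :
    ∃ T : G →L[ℝ] F, ∀ v : V, T (V.subtypeL v) = f v := by
  have hdense : DenseRange (V.subtypeL) := by
    show Dense (Set.range V.subtypeL)
    have h : Set.range (V.subtypeL) = (V : Set G) := Subtype.range_coe
    rw [h]
    exact hV
  have hiso : Isometry (V.subtypeL) := Isometry.of_dist_eq fun x y => rfl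
  exact ⟨f.extend V.subtypeL, fun v => ContinuousLinearMap.extend_eq f hdense hiso.isUniformInducing v⟩

section Main

variable (I : SetIdeal) (𝒜 : Set (Set ℕ))

/-- The generators in the quotient. -/
def gen (A : ↥𝒜) : LInf ⧸ (c0I I) := (c0I I).mkQ (indicatorSeq ↑A)

/-- The linear map sending a finitely supported function to the corresponding
combination of cosets of indicators. -/
def T0 : (↥𝒜 →₀ ℝ) →ₗ[ℝ] LInf ⧸ (c0I I) := Finsupp.linearCombination ℝ (gen I 𝒜)

/-- The corresponding representative in `ℓ∞`. -/
def xg (g : ↥𝒜 →₀ ℝ) : LInf := ∑ A ∈ g.support, g A • indicatorSeq (A : Set ℕ)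

variable {𝒜}

lemma T0_apply (g : ↥𝒜 →₀ ℝ) : T0 I 𝒜 g = (c0I I).mkQ (xg 𝒜 g) := by
  rw [T0, Finsupp.linearCombination_apply, Finsupp.sum, xg, map_sum]
  simp [gen]

lemma xg_apply (g : ↥𝒜 →₀ ℝ) (n : ℕ) :
    xg 𝒜 g n = ∑ A ∈ g.support, g A * (↑A : Set ℕ).indicator (fun _ => (1 : ℝ)) n := by
  rw [xg, lp.coeFn_sum, Finset.sum_apply]
  refine Finset.sum_congr rfl fun A _ => ?_
  rw [lp.coeFn_smul, Pi.smul_apply]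
  rfl

variable {I}

open scoped Classical in
/-- The set of points lying in at least two members of the support. -/
def exceptional (g : ↥𝒜 →₀ ℝ) : Set ℕ :=
  ⋃ p ∈ (g.support ×ˢ g.support).filter (fun p => p.1 ≠ p.2), ((↑p.1 : Set ℕ) ∩ ↑p.2)

open scoped Classical in
lemma exceptional_mem (hAB : ∀ A ∈ 𝒜, ∀ B ∈ 𝒜, A ≠ B → A ∩ B ∈ I.sets)
    (g : ↥𝒜 →₀ ℝ) : exceptional g ∈ I.sets := by
  refine finset_biUnion_mem I _ _ fun p hp => ?_
  rw [Finset.mem_filter] at hp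
  exact hAB ↑p.1 p.1.2 ↑p.2 p.2.2 (Subtype.coe_injective.ne hp.2)

lemma xg_apply_of_mem {g : ↥𝒜 →₀ ℝ} {n : ℕ} (hn : n ∉ exceptional g)
    {A₀ : ↥𝒜} (hA₀ : A₀ ∈ g.support) (hnA : n ∈ (↑A₀ : Set ℕ)) :
    xg 𝒜 g n = g A₀ := by
  rw [xg_apply, Finset.sum_eq_single A₀]
  · simp [Set.indicator_of_mem hnA]
  · intro B hB hBne
    have hnB : n ∉ (↑B : Set ℕ) := by
      intro hnB
      classical
      have hp : (A₀, B) ∈ (g.support ×ˢ g.support).filter (fun p => p.1 ≠ p.2) :=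
        Finset.mem_filter.2 ⟨Finset.mem_product.2 ⟨hA₀, hB⟩, hBne.symm⟩
      have : n ∈ exceptional g := Set.mem_biUnion hp ⟨hnA, hnB⟩
      exact hn this
    simp [Set.indicator_of_notMem hnB]
  · intro h; exact absurd hA₀ h

lemma xg_apply_of_not_mem {g : ↥𝒜 →₀ ℝ} {n : ℕ}
    (h : ∀ A ∈ g.support, n ∉ (↑A : Set ℕ)) : xg 𝒜 g n = 0 := by
  rw [xg_apply]
  exact Finset.sum_eq_zero fun A hAs => by
    simp [Set.indicator_of_notMem (h A hAs)]

variable (𝒜) in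
/-- The linear map from finitely supported functions to `c₀(𝒜)`. -/
def Jmap : (↥𝒜 →₀ ℝ) →ₗ[ℝ] czero ↥𝒜 where
  toFun g :=
    { toFun := fun A => g A
      continuous_toFun := continuous_of_discreteTopology
      zero_at_infty' := by
        rw [Filter.cocompact_eq_cofinite]
        refine Filter.Tendsto.congr' ?_ tendsto_const_nhds
        rw [Filter.EventuallyEq, Filter.eventually_cofinite]
        apply g.finite_support.subset
        intro A hA
        exact fun h => hA h.symm }
  map_add' g₁ g₂ := by
    ext A
    simp
    rfl
  map_smul' c g := by
    ext A
    simp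
    rfl

@[simp] lemma Jmap_apply (g : ↥𝒜 →₀ ℝ) (A : ↥𝒜) : Jmap 𝒜 g A = g A := rfl

variable (I)

lemma norm_T0_le (hAB : ∀ A ∈ 𝒜, ∀ B ∈ 𝒜, A ≠ B → A ∩ B ∈ I.sets)
    (g : ↥𝒜 →₀ ℝ) : ‖T0 I 𝒜 g‖ ≤ ‖Jmap 𝒜 g‖ := by
  have hE : exceptional g ∈ I.sets := exceptional_mem hAB g
  set x := xg 𝒜 g with hx
  have hbdd : ∀ n : ℕ, ‖(exceptional g).indicator (⇑x) n‖ ≤ ‖x‖ := by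
    intro n
    by_cases h : n ∈ exceptional g
    · rw [Set.indicator_of_mem h]
      simpa [Real.norm_eq_abs] using lp_apply_le_norm x n
    · simp [Set.indicator_of_notMem h, lp.norm_nonneg']
  set z : LInf := ⟨(exceptional g).indicator (⇑x),
    memℓp_infty ⟨‖x‖, by rintro r ⟨n, rfl⟩; exact hbdd n⟩⟩ with hz
  have hzc : z ∈ c0I I := mem_c0I_of_subset hE fun n hn => Set.indicator_of_notMem hn _
  have hmk : (c0I I).mkQ x = (c0I I).mkQ (x - z) := by
    rw [map_sub]
    rw [show (c0I I).mkQ z = 0 from (Submodule.Quotient.mk_eq_zero _).2 hzc]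
    rw [sub_zero]
  have key : ∀ n : ℕ, ‖(x - z) n‖ ≤ ‖Jmap 𝒜 g‖ := by
    intro n
    rw [lp.coeFn_sub, Pi.sub_apply]
    by_cases h : n ∈ exceptional g
    · have : z n = x n := Set.indicator_of_mem h _
      rw [this]
      simp [norm_nonneg]
    · have hzn : z n = 0 := Set.indicator_of_notMem h _
      rw [hzn, sub_zero]
      by_cases hex : ∃ A ∈ g.support, n ∈ (↑A : Set ℕ)
      · obtain ⟨A₀, hA₀, hnA⟩ := hex
        rw [xg_apply_of_mem h hA₀ hnA]
        simpa using czero_apply_le_norm (Jmap 𝒜 g) A₀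
      · push_neg at hex
        rw [xg_apply_of_not_mem hex]
        simp [norm_nonneg]
  calc ‖T0 I 𝒜 g‖ = ‖(c0I I).mkQ (x - z)‖ := by rw [T0_apply, hmk]
    _ ≤ ‖x - z‖ := Submodule.Quotient.norm_mk_le _ _
    _ ≤ ‖Jmap 𝒜 g‖ := lp.norm_le_of_forall_le (norm_nonneg _) key

lemma abs_le_norm_T0 (hA : ∀ A ∈ 𝒜, A ∉ I.sets)
    (hAB : ∀ A ∈ 𝒜, ∀ B ∈ 𝒜, A ≠ B → A ∩ B ∈ I.sets)
    (g : ↥𝒜 →₀ ℝ) (A₀ : ↥𝒜) : |g A₀| ≤ ‖T0 I 𝒜 g‖ := by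
  by_cases hs : A₀ ∈ g.support
  · have hE : exceptional g ∈ I.sets := exceptional_mem hAB g
    rw [T0_apply]
    refine le_norm_mkQ fun y hy => ?_
    refine le_of_forall_pos_le_add fun ε hε => ?_
    have hS : {n : ℕ | ε ≤ |y n|} ∈ I.sets := hy ε hε
    have hES : exceptional g ∪ {n : ℕ | ε ≤ |y n|} ∈ I.sets := I.union_mem hE hS
    have hnotsub : ¬ ((↑A₀ : Set ℕ) ⊆ exceptional g ∪ {n : ℕ | ε ≤ |y n|}) :=
      fun hsub => hA ↑A₀ A₀.2 (I.subset_mem hES hsub)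
    obtain ⟨n, hnA, hnES⟩ := Set.not_subset.mp hnotsub
    rw [Set.mem_union, not_or] at hnES
    have h1 : xg 𝒜 g n = g A₀ := xg_apply_of_mem hnES.1 hs hnA
    have h2 : |y n| < ε := by
      have := hnES.2
      rw [Set.mem_setOf_eq, not_le] at this
      exact this
    have h3 : |xg 𝒜 g n - y n| ≤ ‖xg 𝒜 g - y‖ := by
      have := lp_apply_le_norm (xg 𝒜 g - y) n
      rwa [lp.coeFn_sub, Pi.sub_apply] at this
    calc |g A₀| = |xg 𝒜 g n - y n + y n| := by rw [h1]; ring_nf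
      _ ≤ |xg 𝒜 g n - y n| + |y n| := abs_add_le _ _
      _ ≤ ‖xg 𝒜 g - y‖ + ε := add_le_add h3 h2.le
  · rw [Finsupp.notMem_support_iff] at hs
    rw [hs]
    simpa using norm_nonneg (T0 I 𝒜 g)

lemma norm_T0_eq (hA : ∀ A ∈ 𝒜, A ∉ I.sets)
    (hAB : ∀ A ∈ 𝒜, ∀ B ∈ 𝒜, A ≠ B → A ∩ B ∈ I.sets)
    (g : ↥𝒜 →₀ ℝ) : ‖T0 I 𝒜 g‖ = ‖Jmap 𝒜 g‖ := by
  refine le_antisymm (norm_T0_le I hAB g) ?_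
  refine czero_norm_le (norm_nonneg _) fun A => ?_
  rw [Real.norm_eq_abs]
  exact abs_le_norm_T0 I hA hAB g A

variable {I}

lemma Jmap_injective : Function.Injective (Jmap 𝒜) := by
  intro g₁ g₂ h
  ext A
  exact DFunLike.congr_fun h A

lemma dense_range_Jmap : Dense ((LinearMap.range (Jmap 𝒜) : Submodule ℝ (czero ↥𝒜)) :
    Set (czero ↥𝒜)) := by
  classical
  rw [Metric.dense_iff]
  intro f r hr
  have hz := ZeroAtInftyContinuousMapClass.zero_at_infty f
  rw [Filter.cocompact_eq_cofinite] at hz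
  have hfin : {A : Disc ↥𝒜 | ¬ dist (f A) 0 < r / 2}.Finite := by
    rw [← Filter.eventually_cofinite]
    exact Metric.tendsto_nhds.mp hz (r / 2) (by positivity)
  set T := hfin.toFinset with hT
  set g : ↥𝒜 →₀ ℝ := ∑ A ∈ T, Finsupp.single A (f A) with hg
  have hgapp : ∀ A : ↥𝒜, g A = if A ∈ T then f A else 0 := by
    intro A
    rw [hg, Finsupp.finset_sum_apply]
    by_cases hAT : A ∈ T
    · rw [if_pos hAT]
      refine (Finset.sum_eq_single_of_mem A hAT
        fun B _ hBA => Finsupp.single_eq_of_ne' hBA).trans ?_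
      exact Finsupp.single_eq_same
    · rw [if_neg hAT]
      refine Finset.sum_eq_zero fun B hB => ?_
      have : B ≠ A := by rintro rfl; exact hAT hB
      exact Finsupp.single_eq_of_ne' this
  refine ⟨Jmap 𝒜 g, Metric.mem_ball.2 ?_, ⟨g, rfl⟩⟩
  rw [dist_comm, dist_eq_norm]
  have : ‖f - Jmap 𝒜 g‖ ≤ r / 2 := by
    refine czero_norm_le (by positivity) fun A => ?_
    have happ : (f - Jmap 𝒜 g) A = f A - g A := rfl
    rw [happ, hgapp A]
    split_ifs with hAT
    · simp
      positivity
    · rw [sub_zero]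
      have : A ∉ {A : Disc ↥𝒜 | ¬ dist (f A) 0 < r / 2} := fun h => hAT (hfin.mem_toFinset.2 h)
      rw [Set.mem_setOf_eq, not_not, dist_zero_right] at this
      exact this.le
  linarith

end Main
/-- If no member of `𝒜` lies in `I` while pairwise intersections of members of
`𝒜` lie in `I`, then the closed linear span in `ℓ∞ / c_{0,I}` of the cosets
`π 𝟙_A`, `A ∈ 𝒜`, is isometrically isomorphic to `c₀(𝒜)`. -/
theorem closed_span_indicator_cosets_isometric_czero (I : SetIdeal)
    (𝒜 : Set (Set ℕ))
    (hA : ∀ A ∈ 𝒜, A ∉ I.sets)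
    (hAB : ∀ A ∈ 𝒜, ∀ B ∈ 𝒜, A ≠ B → A ∩ B ∈ I.sets) :
    Nonempty
      ((Submodule.span ℝ
          ((fun A : Set ℕ => (c0I I).mkQ (indicatorSeq A)) '' 𝒜)).topologicalClosure
        ≃ₗᵢ[ℝ] czero ↥𝒜) := by
  classical
  haveI : IsClosed ((c0I I : Submodule ℝ LInf) : Set LInf) := c0I_isClosed I
  have hJinj : Function.Injective (Jmap 𝒜) := Jmap_injective
  set V : Submodule ℝ (czero ↥𝒜) := LinearMap.range (Jmap 𝒜) with hV
  let e : (↥𝒜 →₀ ℝ) ≃ₗ[ℝ] V := LinearEquiv.ofInjective _ hJinj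
  have hecoe : ∀ g : ↥𝒜 →₀ ℝ, ((e g : V) : czero ↥𝒜) = Jmap 𝒜 g := fun g => rfl
  let f0 : V →ₗ[ℝ] (LInf ⧸ c0I I) := (T0 I 𝒜) ∘ₗ (e.symm : V ≃ₗ[ℝ] (↥𝒜 →₀ ℝ)).toLinearMap
  have hf0 : ∀ v : V, ‖f0 v‖ = ‖v‖ := by
    intro v
    have h1 : Jmap 𝒜 (e.symm v) = (v : czero ↥𝒜) := by
      rw [← hecoe (e.symm v), e.apply_symm_apply]
    have h2 : ‖f0 v‖ = ‖Jmap 𝒜 (e.symm v)‖ := norm_T0_eq I hA hAB _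
    rw [h2, h1]
    rfl
  let fI : V →ₗᵢ[ℝ] (LInf ⧸ c0I I) := ⟨f0, hf0⟩
  have hdense : DenseRange (V.subtypeL) := by
    show Dense (Set.range V.subtypeL)
    have h : Set.range (V.subtypeL) = (V : Set (czero ↥𝒜)) := Subtype.range_coe
    rw [h]
    exact dense_range_Jmap
  have hiso : Isometry (V.subtypeL) := Isometry.of_dist_eq fun x y => rfl
  obtain ⟨Tc, hTc'⟩ := extend_aux V dense_range_Jmap fI.toContinuousLinearMap
  have hTc : ∀ v : V, Tc (V.subtypeL v) = fI v := hTc'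
  have hTnorm : ∀ x, ‖Tc x‖ = ‖x‖ := by
    have hcl : IsClosed {x : czero ↥𝒜 | ‖Tc x‖ = ‖x‖} :=
      isClosed_eq (Tc.continuous.norm) continuous_norm
    intro x
    refine hdense.induction_on x hcl fun v => ?_
    show ‖Tc (V.subtypeL v)‖ = ‖V.subtypeL v‖
    rw [hTc v]
    exact hf0 v
  let TL : czero ↥𝒜 →ₗᵢ[ℝ] (LInf ⧸ c0I I) := ⟨Tc.toLinearMap, hTnorm⟩
  have hTJ : ∀ g : ↥𝒜 →₀ ℝ, TL (Jmap 𝒜 g) = T0 I 𝒜 g := by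
    intro g
    have h1 : TL (Jmap 𝒜 g) = Tc (V.subtypeL (e g)) := by rw [← hecoe g]; rfl
    rw [h1, hTc (e g)]
    show T0 I 𝒜 (e.symm (e g)) = T0 I 𝒜 g
    rw [e.symm_apply_apply]
  have hspan : Submodule.span ℝ ((fun A : Set ℕ => (c0I I).mkQ (indicatorSeq A)) '' 𝒜)
      = LinearMap.range (T0 I 𝒜) := by
    rw [T0, Finsupp.range_linearCombination]
    congr 1
    rw [Set.image_eq_range]
    rfl
  have hrange : LinearMap.range TL.toLinearMap
      = (Submodule.span ℝ
          ((fun A : Set ℕ => (c0I I).mkQ (indicatorSeq A)) '' 𝒜)).topologicalClosure := by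
    apply le_antisymm
    · rintro _ ⟨x, rfl⟩
      have hx : x ∈ closure (V : Set (czero ↥𝒜)) := dense_range_Jmap x
      have h2 : TL x ∈ closure (⇑TL '' (V : Set (czero ↥𝒜))) :=
        image_closure_subset_closure_image TL.continuous ⟨x, hx, rfl⟩
      have h3 : ⇑TL '' (V : Set (czero ↥𝒜)) ⊆
          ↑(Submodule.span ℝ ((fun A : Set ℕ => (c0I I).mkQ (indicatorSeq A)) '' 𝒜)) := by
        rintro _ ⟨y, ⟨g, rfl⟩, rfl⟩
        rw [hTJ g, hspan]
        exact ⟨g, rfl⟩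
      have h4 : TL x ∈ closure
          (↑(Submodule.span ℝ ((fun A : Set ℕ => (c0I I).mkQ (indicatorSeq A)) '' 𝒜))
            : Set (LInf ⧸ c0I I)) := closure_mono h3 h2
      rwa [← Submodule.topologicalClosure_coe, SetLike.mem_coe] at h4
    · apply Submodule.topologicalClosure_minimal
      · rw [hspan]
        rintro _ ⟨g, rfl⟩
        exact ⟨Jmap 𝒜 g, hTJ g⟩
      · have h5 : (↑(LinearMap.range TL.toLinearMap) : Set (LInf ⧸ c0I I))
            = Set.range ⇑TL := by
          rw [LinearMap.coe_range]
          rfl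
        rw [h5]
        exact TL.isometry.isClosedEmbedding.isClosed_range
  let E1 := TL.equivRange
  let E2 : (Submodule.span ℝ
        ((fun A : Set ℕ => (c0I I).mkQ (indicatorSeq A)) '' 𝒜)).topologicalClosure
      ≃ₗᵢ[ℝ] LinearMap.range TL.toLinearMap :=
    { toLinearEquiv := LinearEquiv.ofEq _ _ hrange.symm
      norm_map' := fun x => rfl }
  exact ⟨E2.trans E1.symm⟩
end
end

section
/- If Γ is an uncountable set, then c₀(Γ) is not isomorphic to a subspace of ℓ∞: there is no bounded linear map T : c₀(Γ) → ℓ∞ for which there exists c > 0 with ‖x‖ ≤ c·‖T x‖ for all x ∈ c₀(Γ). -/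
open scoped ENNReal
set_option synthInstance.maxHeartbeats 1000000
set_option maxHeartbeats 1000000

noncomputable section

open Classical in
/-- The standard unit vector `e_γ` in `c₀(Γ)`. -/
def ee (Γ : Type*) (γ : Γ) : czero Γ where
  toFun := fun γ' : Disc Γ => if γ' = γ then (1 : ℝ) else 0
  continuous_toFun := continuous_of_discreteTopology
  zero_at_infty' := by
    have h : ({(γ : Disc Γ)}ᶜ : Set (Disc Γ)) ∈ Filter.cocompact (Disc Γ) :=
      Filter.mem_cocompact.2 ⟨{γ}, isCompact_singleton, subset_rfl⟩
    refine Filter.Tendsto.congr' ?_ tendsto_const_nhds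
    filter_upwards [h] with γ' hγ'
    simp only [Set.mem_compl_iff, Set.mem_singleton_iff] at hγ'
    simp [hγ']
    exact hγ'

open Classical in
lemma ee_apply {Γ : Type*} (γ : Γ) (γ' : Disc Γ) :
    (ee Γ γ) γ' = if γ' = γ then (1 : ℝ) else 0 := rfl

lemma czero_sum_apply {Γ : Type*} {ι : Type*} (s : Finset ι) (f : ι → czero Γ)
    (γ : Disc Γ) : (∑ i ∈ s, f i) γ = ∑ i ∈ s, f i γ := by
  classical
  induction s using Finset.induction with
  | empty => simp
  | insert a s h ih =>
      rw [Finset.sum_insert h, ZeroAtInftyContinuousMap.coe_add, Pi.add_apply, ih,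
        Finset.sum_insert h]

lemma norm_ee {Γ : Type*} (γ : Γ) : ‖ee Γ γ‖ = 1 := by
  classical
  rw [← ZeroAtInftyContinuousMap.norm_toBCF_eq_norm]
  apply le_antisymm
  · refine (BoundedContinuousFunction.norm_le zero_le_one).2 fun x => ?_
    have hx : (ee Γ γ).toBCF x = (ee Γ γ) x := rfl
    rw [hx, ee_apply]
    split <;> simp
  · have h := (ee Γ γ).toBCF.norm_coe_le_norm γ
    have hx : (ee Γ γ).toBCF γ = (ee Γ γ) γ := rfl
    rw [hx, show (ee Γ γ) γ = (1 : ℝ) from if_pos rfl] at h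
    simpa using h

/-- For uncountable `Γ`, the space `c₀(Γ)` is not isomorphic to a subspace
of `ℓ∞`. -/
theorem czero_not_embed_in_linf (Γ : Type*) [Uncountable Γ] :
    ¬∃ (T : czero Γ →L[ℝ] LInf) (c : ℝ), 0 < c ∧
      ∀ x : czero Γ, ‖x‖ ≤ c * ‖T x‖ := by
  classical
  rintro ⟨T, c, hc, hT⟩
  -- each basis vector has a large coordinate
  have key : ∀ γ : Γ, ∃ n : ℕ, 1 / (2 * c) < ‖(T (ee Γ γ)) n‖ := by
    intro γ
    have h1 : (1 : ℝ) ≤ c * ‖T (ee Γ γ)‖ := by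
      have := hT (ee Γ γ); rwa [norm_ee] at this
    have h3 : 1 / (2 * c) < ‖T (ee Γ γ)‖ := by
      rw [div_lt_iff₀ (by positivity)]
      nlinarith [norm_nonneg (T (ee Γ γ))]
    by_contra hcon
    push_neg at hcon
    have hb : ‖T (ee Γ γ)‖ ≤ 1 / (2 * c) := by
      rw [lp.norm_eq_ciSup]
      exact ciSup_le hcon
    linarith
  set g : Γ → ℕ × Bool :=
    fun γ => ((key γ).choose, decide (0 ≤ (T (ee Γ γ)) (key γ).choose)) with hg
  -- some fiber of g is infinite
  have hfib : ∃ p : ℕ × Bool, (g ⁻¹' {p}).Infinite := by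
    by_contra h
    push_neg at h
    have huniv : (Set.univ : Set Γ) = ⋃ p : ℕ × Bool, g ⁻¹' {p} := by
      ext γ; simp
    have hcnt : (Set.univ : Set Γ).Countable := by
      rw [huniv]
      exact Set.countable_iUnion fun p => (h p).countable
    rw [Set.countable_univ_iff] at hcnt
    exact (not_countable (α := Γ)) hcnt
  obtain ⟨⟨n, b⟩, hinf⟩ := hfib
  set k : ℕ := ⌈2 * c * ‖T‖⌉₊ + 1 with hk
  obtain ⟨t, hts, htcard⟩ := hinf.exists_subset_card_eq k
  set x : czero Γ := ∑ γ ∈ t, ee Γ γ with hx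
  -- ‖x‖ ≤ 1
  have hxnorm : ‖x‖ ≤ 1 := by
    rw [← ZeroAtInftyContinuousMap.norm_toBCF_eq_norm]
    refine (BoundedContinuousFunction.norm_le zero_le_one).2 fun γ' => ?_
    have hcoe : x.toBCF γ' = x γ' := rfl
    rw [hcoe, hx, czero_sum_apply]
    have : ∑ γ ∈ t, (ee Γ γ) γ' = if γ' ∈ t then (1 : ℝ) else 0 := by
      convert (Finset.sum_congr rfl fun γ _ => ee_apply γ γ').trans
        (Finset.sum_ite_eq t γ' (fun _ => (1 : ℝ))) using 2
      exact Iff.rfl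
    rw [this]; split <;> simp
  -- properties of elements of t
  have hmem : ∀ γ ∈ t, (key γ).choose = n ∧ decide (0 ≤ (T (ee Γ γ)) n) = b := by
    intro γ hγ
    have := hts hγ
    simp only [Set.mem_preimage, Set.mem_singleton_iff, hg, Prod.mk.injEq] at this
    obtain ⟨h1, h2⟩ := this
    exact ⟨h1, by rw [← h1]; exact h2⟩
  have hbig : ∀ γ ∈ t, 1 / (2 * c) < ‖(T (ee Γ γ)) n‖ := by
    intro γ hγ
    have := (key γ).choose_spec
    rwa [(hmem γ hγ).1] at this
  -- coordinate n of T x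
  have hcoord : (T x) n = ∑ γ ∈ t, (T (ee Γ γ)) n := by
    rw [hx, map_sum, lp.coeFn_sum, Finset.sum_apply]
  -- the coordinate is large in absolute value
  have hlarge : (k : ℝ) / (2 * c) ≤ ‖(T x) n‖ := by
    rw [hcoord]
    rcases Bool.eq_false_or_eq_true b with hb | hb
    · -- all terms positive
      have hpos : ∀ γ ∈ t, 1 / (2 * c) ≤ (T (ee Γ γ)) n := by
        intro γ hγ
        have hd := (hmem γ hγ).2
        rw [hb, decide_eq_true_eq] at hd
        have := hbig γ hγ
        rw [Real.norm_eq_abs, abs_of_nonneg hd] at this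
        linarith
      have hsum : (k : ℝ) / (2 * c) ≤ ∑ γ ∈ t, (T (ee Γ γ)) n := by
        calc (k : ℝ) / (2 * c) = ∑ _γ ∈ t, (1 / (2 * c) : ℝ) := by
              rw [Finset.sum_const, htcard]; push_cast; ring
          _ ≤ ∑ γ ∈ t, (T (ee Γ γ)) n := Finset.sum_le_sum hpos
      rw [Real.norm_eq_abs]
      exact hsum.trans (le_abs_self _)
    · -- all terms negative
      have hneg : ∀ γ ∈ t, (T (ee Γ γ)) n ≤ -(1 / (2 * c)) := by
        intro γ hγ
        have hd := (hmem γ hγ).2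
        rw [hb, decide_eq_false_iff_not, not_le] at hd
        have := hbig γ hγ
        rw [Real.norm_eq_abs, abs_of_neg hd] at this
        linarith
      have hsum : ∑ γ ∈ t, (T (ee Γ γ)) n ≤ -((k : ℝ) / (2 * c)) := by
        calc ∑ γ ∈ t, (T (ee Γ γ)) n ≤ ∑ _γ ∈ t, (-(1 / (2 * c)) : ℝ) :=
              Finset.sum_le_sum hneg
          _ = -((k : ℝ) / (2 * c)) := by
              rw [Finset.sum_const, htcard]; push_cast; ring
      rw [Real.norm_eq_abs]
      calc (k : ℝ) / (2 * c) ≤ -(∑ γ ∈ t, (T (ee Γ γ)) n) := by linarith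
        _ ≤ |∑ γ ∈ t, (T (ee Γ γ)) n| := neg_le_abs _
  -- conclude
  have h1 : ‖(T x) n‖ ≤ ‖T x‖ := lp.norm_apply_le_norm ENNReal.top_ne_zero (T x) n
  have h2 : ‖T x‖ ≤ ‖T‖ * ‖x‖ := T.le_opNorm x
  have h3 : ‖T‖ * ‖x‖ ≤ ‖T‖ := by
    calc ‖T‖ * ‖x‖ ≤ ‖T‖ * 1 := by
          exact mul_le_mul_of_nonneg_left hxnorm (norm_nonneg T)
      _ = ‖T‖ := mul_one _
  have hkk : 2 * c * ‖T‖ < (k : ℝ) := by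
    have := Nat.le_ceil (2 * c * ‖T‖)
    rw [hk]; push_cast; linarith
  have : ‖T‖ < (k : ℝ) / (2 * c) := by
    rw [lt_div_iff₀ (by positivity)]; linarith
  linarith
end
end
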